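/- Let A, B ∈ Matrix (Fin n) (Fin n) ℂ and suppose u ≡ c is a constant scalar. Then the Volterra series solution of x' = Ax + c Bx with x(0)=x₀ sums to exp(t(A + cB)) x₀; equivalently, ∑_{k=0}^∞ cᵏ ∫_{0≤τ_k≤⋯≤τ₁≤t} e^{(t−τ₁)A} B e^{(τ₁−τ₂)A} B ⋯ B e^{τ_k A} dτ = exp(t(A+cB)). -/

import Mathlib

open MeasureTheory intervalIntegral

attribute [local instance] Matrix.linftyOpNormedRing Matrix.linftyOpNormedAlgebra
  Matrix.linftyOpNormedSpace

/-- The matrix-valued `k`-th Volterra (Dyson/Peano–Baker) term for the time-independent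
perturbation: `T 0 t = e^{tA}` and `T (k+1) t = ∫₀ᵗ e^{(t-τ)A} B (T k τ) dτ`, i.e. the
iterated integral over the ordered simplex `{0 ≤ τ_k ≤ ⋯ ≤ τ₁ ≤ t}` of
`e^{(t-τ₁)A} B e^{(τ₁-τ₂)A} B ⋯ B e^{τ_k A}`. -/
noncomputable def dysonTerm {n : ℕ} (A B : Matrix (Fin n) (Fin n) ℂ) :
    ℕ → ℝ → Matrix (Fin n) (Fin n) ℂ
  | 0, t => NormedSpace.exp (t • A)
  | k + 1, t => ∫ τ in (0:ℝ)..t, NormedSpace.exp ((t - τ) • A) * B * dysonTerm A B k τ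

namespace DysonProof

open NormedSpace

variable {n : ℕ} (A B : Matrix (Fin n) (Fin n) ℂ) (c : ℂ)

/-- The Dyson remainder: same recursion as `dysonTerm`, but started at the full solution. -/
noncomputable def rem : ℕ → ℝ → Matrix (Fin n) (Fin n) ℂ
  | 0, t => exp (t • (A + c • B))
  | k + 1, t => ∫ τ in (0:ℝ)..t, exp ((t - τ) • A) * B * rem k τ

lemma exp_split (s u : ℝ) : exp ((s + u) • A) = exp (s • A) * exp (u • A) := by
  rw [add_smul]
  exact exp_add_of_commute (((Commute.refl A).smul_left s).smul_right u)

lemma cont_exp : Continuous fun s : ℝ => exp (s • A) :=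
  exp_continuous.comp (continuous_id.smul continuous_const)

lemma hasDerivAt_e (s : ℝ) :
    HasDerivAt (fun u : ℝ => exp (u • A)) (exp (s • A) * A) s := by
  exact hasDerivAt_exp_smul_const A s

lemma hasDerivAt_e' (s : ℝ) :
    HasDerivAt (fun u : ℝ => exp (u • A)) (A * exp (s • A)) s := by
  exact hasDerivAt_exp_smul_const' A s

lemma factored (h : ℝ → Matrix (Fin n) (Fin n) ℂ) (hh : Continuous h) (s : ℝ) :
    (∫ τ in (0:ℝ)..s, exp ((s - τ) • A) * B * h τ)
      = exp (s • A) * ∫ τ in (0:ℝ)..s, exp ((-τ) • A) * B * h τ := by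
  have hint : @IntervalIntegrable _ _ NormedAddGroup.toENormedAddMonoid (fun τ => exp ((-τ) • A) * B * h τ) volume 0 s :=
    ((((cont_exp A).comp continuous_neg).mul continuous_const).mul hh).intervalIntegrable _ _
  have hcongr : (∫ τ in (0:ℝ)..s, exp ((s - τ) • A) * B * h τ)
      = ∫ τ in (0:ℝ)..s, exp (s • A) * (exp ((-τ) • A) * B * h τ) := by
    refine intervalIntegral.integral_congr fun τ _ => ?_
    show exp ((s - τ) • A) * B * h τ = exp (s • A) * (exp ((-τ) • A) * B * h τ)
    rw [sub_eq_add_neg, exp_split]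
    simp only [mul_assoc]
  rw [hcongr]
  simpa using (ContinuousLinearMap.mul ℂ (Matrix (Fin n) (Fin n) ℂ)
    (exp (s • A))).intervalIntegral_comp_comm hint

lemma cont_of_rec (g : ℕ → ℝ → Matrix (Fin n) (Fin n) ℂ) (h0 : Continuous (g 0))
    (hrec : ∀ k s, g (k + 1) s = ∫ τ in (0:ℝ)..s, exp ((s - τ) • A) * B * g k τ) :
    ∀ k, Continuous (g k) := by
  intro k
  induction k with
  | zero => exact h0
  | succ k ih =>
    have hint : Continuous fun τ => exp ((-τ) • A) * B * g k τ :=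
      (((cont_exp A).comp continuous_neg).mul continuous_const).mul ih
    have hfun : g (k + 1)
        = fun s => exp (s • A) * ∫ τ in (0:ℝ)..s, exp ((-τ) • A) * B * g k τ :=
      funext fun s => (hrec k s).trans (factored A B (g k) ih s)
    rw [hfun]
    exact (cont_exp A).mul
      (intervalIntegral.continuous_primitive (fun a b => hint.intervalIntegrable a b) 0)

lemma abs_integral_abs_pow (k : ℕ) (τ : ℝ) :
    |∫ σ in (0:ℝ)..τ, |σ| ^ k| = |τ| ^ (k + 1) / (k + 1) := by
  rcases le_total 0 τ with h | h
  · have h1 : (∫ σ in (0:ℝ)..τ, |σ| ^ k) = ∫ σ in (0:ℝ)..τ, σ ^ k := by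
      refine intervalIntegral.integral_congr fun σ hσ => ?_
      rw [Set.uIcc_of_le h] at hσ
      rw [abs_of_nonneg hσ.1]
    rw [h1, integral_pow, abs_of_nonneg h, zero_pow (Nat.succ_ne_zero k), sub_zero,
      abs_div, abs_of_nonneg (pow_nonneg h (k + 1)),
      abs_of_nonneg (by positivity : (0:ℝ) ≤ (k:ℝ) + 1)]
  · have h1 : (∫ σ in (0:ℝ)..τ, |σ| ^ k) = ∫ σ in (0:ℝ)..τ, (-σ) ^ k := by
      refine intervalIntegral.integral_congr fun σ hσ => ?_
      rw [Set.uIcc_of_ge h] at hσ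
      rw [abs_of_nonpos hσ.2]
    rw [h1, intervalIntegral.integral_comp_neg fun σ => σ ^ k, integral_pow,
      abs_of_nonpos h, neg_zero, zero_pow (Nat.succ_ne_zero k), zero_sub, abs_div, abs_neg,
      abs_of_nonneg (pow_nonneg (neg_nonneg.2 h) (k + 1)),
      abs_of_nonneg (by positivity : (0:ℝ) ≤ (k:ℝ) + 1)]

lemma bound_of_rec (t : ℝ) (g : ℕ → ℝ → Matrix (Fin n) (Fin n) ℂ) (h0 : Continuous (g 0))
    (hrec : ∀ k s, g (k + 1) s = ∫ τ in (0:ℝ)..s, exp ((s - τ) • A) * B * g k τ)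
    (C K : ℝ) (hC : ∀ τ ∈ Set.uIcc (0:ℝ) t, ‖g 0 τ‖ ≤ C)
    (hK : ∀ s ∈ Set.uIcc (-|t|) |t|, ‖exp (s • A)‖ ≤ K) :
    ∀ k, ∀ τ ∈ Set.uIcc (0:ℝ) t, ‖g k τ‖ ≤ C * (K * ‖B‖) ^ k * |τ| ^ k / k.factorial := by
  have hC0 : 0 ≤ C := le_trans (norm_nonneg _) (hC 0 Set.left_mem_uIcc)
  have hK0 : 0 ≤ K := le_trans (norm_nonneg _) (hK 0 (by
    rw [Set.uIcc_of_le (neg_nonpos.mpr (abs_nonneg t) |>.trans (abs_nonneg t))]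
    exact ⟨neg_nonpos.mpr (abs_nonneg t), abs_nonneg t⟩))
  intro k
  induction k with
  | zero => intro τ hτ; simpa using hC τ hτ
  | succ k ih =>
    intro τ hτ
    have hsubI : Set.uIcc (0:ℝ) τ ⊆ Set.uIcc (0:ℝ) t :=
      Set.uIcc_subset_uIcc Set.left_mem_uIcc hτ
    -- pointwise bound of integrand on Ι 0 τ
    have hKB : 0 ≤ K * ‖B‖ := mul_nonneg hK0 (norm_nonneg _)
    have hbound : ∀ σ ∈ Set.uIoc (0:ℝ) τ,
        ‖exp ((τ - σ) • A) * B * g k σ‖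
          ≤ (K * ‖B‖) * (C * (K * ‖B‖) ^ k * |σ| ^ k / k.factorial) := by
      intro σ hσ
      have hσ' : σ ∈ Set.uIcc (0:ℝ) t := hsubI (Set.uIoc_subset_uIcc hσ)
      have hmem : τ - σ ∈ Set.uIcc (-|t|) |t| := by
        rw [Set.uIcc_of_le ((neg_nonpos.mpr (abs_nonneg t)).trans (abs_nonneg t))]
        have h1 : min 0 t ≤ τ ∧ τ ≤ max 0 t := by
          simpa [Set.uIcc, Set.mem_Icc] using hτ
        have h2 : min 0 t ≤ σ ∧ σ ≤ max 0 t := by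
          simpa [Set.uIcc, Set.mem_Icc] using hσ'
        have hmm : max 0 t - min 0 t = |t| := by
          rcases le_total 0 t with ht | ht
          · rw [max_eq_right ht, min_eq_left ht, abs_of_nonneg ht]; ring
          · rw [max_eq_left ht, min_eq_right ht, abs_of_nonpos ht]; ring
        constructor
        · nlinarith [h1.1, h2.2]
        · nlinarith [h1.2, h2.1]
      calc ‖exp ((τ - σ) • A) * B * g k σ‖
          ≤ ‖exp ((τ - σ) • A) * B‖ * ‖g k σ‖ := norm_mul_le _ _
        _ ≤ (‖exp ((τ - σ) • A)‖ * ‖B‖) * ‖g k σ‖ :=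
            mul_le_mul_of_nonneg_right (norm_mul_le _ _) (norm_nonneg _)
        _ ≤ (K * ‖B‖) * ‖g k σ‖ :=
            mul_le_mul_of_nonneg_right
              (mul_le_mul_of_nonneg_right (hK _ hmem) (norm_nonneg _)) (norm_nonneg _)
        _ ≤ (K * ‖B‖) * (C * (K * ‖B‖) ^ k * |σ| ^ k / k.factorial) :=
            mul_le_mul_of_nonneg_left (ih σ hσ') hKB
    have hgint : IntervalIntegrable
        (fun σ => (K * ‖B‖) * (C * (K * ‖B‖) ^ k * |σ| ^ k / k.factorial)) volume 0 τ := by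
      apply Continuous.intervalIntegrable
      continuity
    have hnorm := intervalIntegral.norm_integral_le_abs_of_norm_le
      (f := fun σ => exp ((τ - σ) • A) * B * g k σ)
      (ae_restrict_of_forall_mem measurableSet_uIoc hbound) hgint
    rw [hrec k τ]
    refine hnorm.trans ?_
    have hpull : (∫ σ in (0:ℝ)..τ, (K * ‖B‖) * (C * (K * ‖B‖) ^ k * |σ| ^ k / k.factorial))
        = ((K * ‖B‖) * (C * (K * ‖B‖) ^ k / k.factorial)) * ∫ σ in (0:ℝ)..τ, |σ| ^ k := by
      rw [← intervalIntegral.integral_const_mul]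
      refine intervalIntegral.integral_congr fun σ _ => ?_
      ring
    rw [hpull, abs_mul, abs_integral_abs_pow]
    rw [abs_of_nonneg (by positivity : (0:ℝ) ≤ (K * ‖B‖) * (C * (K * ‖B‖) ^ k / k.factorial))]
    rw [Nat.factorial_succ]
    push_cast
    apply le_of_eq
    have hfk : (k.factorial : ℝ) ≠ 0 := Nat.cast_ne_zero.mpr k.factorial_ne_zero
    have hk1 : ((k:ℝ) + 1) ≠ 0 := by positivity
    field_simp
    ring

lemma duhamel (t : ℝ) :
    exp (t • (A + c • B)) = exp (t • A)
      + c • ∫ τ in (0:ℝ)..t, exp ((t - τ) • A) * B * exp (τ • (A + c • B)) := by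
  set M := A + c • B with hM
  have key : ∀ τ : ℝ, HasDerivAt (fun σ : ℝ => exp ((-σ) • A) * exp (σ • M))
      (c • (exp ((-τ) • A) * B * exp (τ • M))) τ := by
    intro τ
    have h1 : HasDerivAt (fun σ : ℝ => exp ((-σ) • A))
        ((-1 : ℝ) • (exp ((-τ) • A) * A)) τ :=
      (hasDerivAt_e A (-τ)).scomp τ (hasDerivAt_neg τ)
    have h2 : HasDerivAt (fun σ : ℝ => exp (σ • M)) (M * exp (τ • M)) τ :=
      hasDerivAt_e' M τ
    have h3 := h1.mul h2
    convert h3 using 1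
    · rfl
    · rfl
    · rfl
    · rfl
    rw [hM]
    simp only [neg_one_smul, neg_mul, mul_add, add_mul, mul_assoc, smul_mul_assoc,
      mul_smul_comm]
    abel
  have hcont : Continuous fun τ : ℝ => c • (exp ((-τ) • A) * B * exp (τ • M)) := by
    refine Continuous.const_smul ?_ c
    exact (((cont_exp A).comp continuous_neg).mul continuous_const).mul (cont_exp M)
  have hFTC := intervalIntegral.integral_eq_sub_of_hasDerivAt
    (f := fun σ : ℝ => exp ((-σ) • A) * exp (σ • M))
    (fun τ _ => key τ) (hcont.intervalIntegrable 0 t)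
  simp only [neg_zero, zero_smul, exp_zero, mul_one, one_mul] at hFTC
  have hsmul : (∫ τ in (0:ℝ)..t, c • (exp ((-τ) • A) * B * exp (τ • M)))
      = c • ∫ τ in (0:ℝ)..t, exp ((-τ) • A) * B * exp (τ • M) :=
    intervalIntegral.integral_smul c _
  rw [hsmul] at hFTC
  have hfac := factored A B (fun τ => exp (τ • M)) (cont_exp M) t
  rw [hfac]
  have hinv : exp (t • A) * exp ((-t) • A) = 1 := by
    rw [← exp_split]
    simp
  calc exp (t • M)
      = (exp (t • A) * exp ((-t) • A)) * exp (t • M) := by rw [hinv, one_mul]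
    _ = exp (t • A) * (exp ((-t) • A) * exp (t • M)) := by rw [mul_assoc]
    _ = exp (t • A) * (1 + c • ∫ τ in (0:ℝ)..t, exp ((-τ) • A) * B * exp (τ • M)) := by
        rw [hFTC]; congr 1; abel
    _ = exp (t • A)
        + exp (t • A) * (c • ∫ τ in (0:ℝ)..t, exp ((-τ) • A) * B * exp (τ • M)) := by
        rw [mul_add, mul_one]
    _ = _ := by rw [mul_smul_comm]

lemma rem_rec (k : ℕ) (s : ℝ) :
    rem A B c (k + 1) s = ∫ τ in (0:ℝ)..s, exp ((s - τ) • A) * B * rem A B c k τ := rfl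

lemma dyson_rec (k : ℕ) (s : ℝ) :
    dysonTerm A B (k + 1) s = ∫ τ in (0:ℝ)..s, exp ((s - τ) • A) * B * dysonTerm A B k τ :=
  rfl

lemma cont_dyson (k : ℕ) : Continuous (dysonTerm A B k) :=
  cont_of_rec A B (dysonTerm A B) (cont_exp A) (dyson_rec A B) k

lemma cont_rem (k : ℕ) : Continuous (rem A B c k) :=
  cont_of_rec A B (rem A B c) (cont_exp (A + c • B)) (rem_rec A B c) k

lemma step (k : ℕ) (s : ℝ) :
    rem A B c k s = dysonTerm A B k s + c • rem A B c (k + 1) s := by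
  induction k generalizing s with
  | zero => exact duhamel A B c s
  | succ k ih =>
    rw [rem_rec, rem_rec, dyson_rec]
    have h1 : (∫ τ in (0:ℝ)..s, exp ((s - τ) • A) * B * rem A B c k τ)
        = ∫ τ in (0:ℝ)..s, (exp ((s - τ) • A) * B * dysonTerm A B k τ
            + c • (exp ((s - τ) • A) * B * rem A B c (k + 1) τ)) := by
      refine intervalIntegral.integral_congr fun τ _ => ?_
      rw [ih τ, mul_add, mul_smul_comm]
    rw [h1]
    have hint1 : @IntervalIntegrable _ _ NormedAddGroup.toENormedAddMonoid
        (fun τ => exp ((s - τ) • A) * B * dysonTerm A B k τ) volume 0 s := by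
      apply Continuous.intervalIntegrable
      exact (((cont_exp A).comp (continuous_const.sub continuous_id)).mul
        continuous_const).mul (cont_dyson A B k)
    have hint2 : @IntervalIntegrable _ _ NormedAddGroup.toENormedAddMonoid
        (fun τ => c • (exp ((s - τ) • A) * B * rem A B c (k + 1) τ)) volume 0 s := by
      apply Continuous.intervalIntegrable
      exact ((((cont_exp A).comp (continuous_const.sub continuous_id)).mul
        continuous_const).mul (cont_rem A B c (k + 1))).const_smul c
    rw [intervalIntegral.integral_add hint1 hint2, intervalIntegral.integral_smul]

lemma telescope (t : ℝ) (N : ℕ) :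
    exp (t • (A + c • B))
      = (∑ k ∈ Finset.range N, c ^ k • dysonTerm A B k t) + c ^ N • rem A B c N t := by
  induction N with
  | zero => simp [rem]
  | succ N ih =>
    rw [ih, step A B c N t, Finset.sum_range_succ]
    rw [smul_add, smul_smul, ← pow_succ]
    abel

end DysonProof

/-- **The Volterra series with constant input sums to the exponential of `A + cB`:**
`∑ₖ cᵏ ∫_{0≤τ_k≤⋯≤τ₁≤t} e^{(t-τ₁)A} B ⋯ B e^{τ_k A} dτ = exp (t (A + c B))`. -/
theorem stmt_18 {n : ℕ} (A B : Matrix (Fin n) (Fin n) ℂ) (c : ℂ) (t : ℝ) :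
    ∑' k : ℕ, c ^ k • dysonTerm A B k t = NormedSpace.exp (t • (A + c • B)) := by
  classical
  open DysonProof NormedSpace in
  -- bounds
  obtain ⟨K, hK⟩ := (isCompact_uIcc (a := -|t|) (b := |t|)).exists_bound_of_continuousOn
    (cont_exp A).continuousOn
  obtain ⟨C, hC⟩ := (isCompact_uIcc (a := (0:ℝ)) (b := t)).exists_bound_of_continuousOn
    (cont_exp (A + c • B)).continuousOn
  have hsub : Set.uIcc (0:ℝ) t ⊆ Set.uIcc (-|t|) |t| := by
    rw [Set.uIcc_of_le ((neg_nonpos.mpr (abs_nonneg t)).trans (abs_nonneg t))]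
    intro x hx
    have h1 : min 0 t ≤ x ∧ x ≤ max 0 t := by simpa [Set.uIcc, Set.mem_Icc] using hx
    constructor
    · exact le_trans (le_min (by linarith [abs_nonneg t]) (neg_abs_le t)) h1.1
    · exact le_trans h1.2 (max_le (abs_nonneg t) (le_abs_self t))
  have hKt : ∀ τ ∈ Set.uIcc (0:ℝ) t, ‖dysonTerm A B 0 τ‖ ≤ K := fun τ hτ => hK _ (hsub hτ)
  have hTbound := bound_of_rec A B t (dysonTerm A B) (cont_exp A) (dyson_rec A B) K K hKt hK
  have hRbound := bound_of_rec A B t (rem A B c) (cont_exp (A + c • B)) (rem_rec A B c) C K hC hK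
  set x : ℝ := ‖c‖ * (K * ‖B‖) * |t| with hx
  have hx0 : 0 ≤ x := by
    have hK0 : 0 ≤ K := le_trans (norm_nonneg _) (hKt 0 Set.left_mem_uIcc)
    positivity
  have hTk : ∀ k : ℕ, ‖c ^ k • dysonTerm A B k t‖ ≤ K * (x ^ k / k.factorial) := by
    intro k
    rw [norm_smul, norm_pow]
    have := hTbound k t Set.right_mem_uIcc
    have h1 : ‖c‖ ^ k * ‖dysonTerm A B k t‖
        ≤ ‖c‖ ^ k * (K * (K * ‖B‖) ^ k * |t| ^ k / k.factorial) := by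
      exact mul_le_mul_of_nonneg_left this (by positivity)
    refine h1.trans (le_of_eq ?_)
    rw [hx, mul_pow, mul_pow]
    field_simp
    ring
  have hsummable : Summable fun k : ℕ => c ^ k • dysonTerm A B k t := by
    refine Summable.of_norm_bounded ((Real.summable_pow_div_factorial x).mul_left K) hTk
  have hRk : ∀ N : ℕ, ‖c ^ N • rem A B c N t‖ ≤ C * (x ^ N / N.factorial) := by
    intro N
    rw [norm_smul, norm_pow]
    have := hRbound N t Set.right_mem_uIcc
    have h1 : ‖c‖ ^ N * ‖rem A B c N t‖
        ≤ ‖c‖ ^ N * (C * (K * ‖B‖) ^ N * |t| ^ N / N.factorial) :=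
      mul_le_mul_of_nonneg_left this (by positivity)
    refine h1.trans (le_of_eq ?_)
    rw [hx, mul_pow, mul_pow]
    field_simp
    ring
  have hRzero : Filter.Tendsto (fun N : ℕ => c ^ N • rem A B c N t) Filter.atTop (nhds 0) := by
    refine squeeze_zero_norm hRk ?_
    have := ((Real.summable_pow_div_factorial x).mul_left C).tendsto_atTop_zero
    exact this
  have hlim : Filter.Tendsto (fun N : ℕ => ∑ k ∈ Finset.range N, c ^ k • dysonTerm A B k t)
      Filter.atTop (nhds (exp (t • (A + c • B)))) := by
    have heq : (fun N : ℕ => ∑ k ∈ Finset.range N, c ^ k • dysonTerm A B k t)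
        = fun N : ℕ => exp (t • (A + c • B)) - c ^ N • rem A B c N t := by
      funext N
      rw [telescope A B c t N]
      abel
    rw [heq]
    simpa using Filter.Tendsto.sub (tendsto_const_nhds
      (x := exp (t • (A + c • B))) (f := Filter.atTop)) hRzero
  exact tendsto_nhds_unique hsummable.hasSum.tendsto_sum_nat hlim
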